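/- If k ∈ P and I ⊆ [0,1] is an interval with 0.01|I| ≤ |E_k ∩ I| ≤ 0.1|I|, then either |E_{k−1} ∩ I| > 0.8|I| or |E_{k+1} ∩ I| > 0.8|I|. -/
import Mathlib


open MeasureTheory Set Filter Metric Topology

/-- One-dimensional Lebesgue measure of a set, as a real number. -/
noncomputable def len (A : Set ℝ) : ℝ := (volume A).toReal

/-- The discretized level set `E_k = {s ∈ [0,1] | kδ ≤ g(s) ≤ (k+1)δ}`. -/
def lev (g : ℝ → ℝ) (δ : ℝ) (k : ℤ) : Set ℝ :=
  {s ∈ Icc (0:ℝ) 1 | (k : ℝ) * δ ≤ g s ∧ g s ≤ ((k : ℝ) + 1) * δ}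

/-- The neighbors `N_k = E_{k-1} ∪ E_k ∪ E_{k+1}`. -/
def nbr (g : ℝ → ℝ) (δ : ℝ) (k : ℤ) : Set ℝ :=
  lev g δ (k - 1) ∪ lev g δ k ∪ lev g δ (k + 1)

/-- The set of satisfied indices `𝒮`. -/
def sat (g : ℝ → ℝ) (δ : ℝ) : Set ℕ :=
  {k | ∃ a b : ℝ, 0 ≤ a ∧ a < b ∧ b ≤ 1 ∧
    len (lev g δ k ∩ Ioo a b) > 0.01 * (b - a) ∧
    len ((Icc (0:ℝ) 1 \ nbr g δ k) ∩ Ioo a b) > 0.01 * (b - a)}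

/-- The set `𝒫` of (triples of) unsatisfied indices. -/
def unsat (g : ℝ → ℝ) (δ : ℝ) : Set ℕ :=
  {k | k ∉ sat g δ ∧ k - 1 ∉ sat g δ ∧ k + 1 ∉ sat g δ}

/-- Lemma 3.1 (rigidity): if `k ∈ 𝒫` and `I = (a,b) ⊆ [0,1]` is an interval with
`0.01|I| ≤ |E_k ∩ I| ≤ 0.1|I|`, then `|E_{k-1} ∩ I| > 0.8|I|` or `|E_{k+1} ∩ I| > 0.8|I|`. -/
lemma vol_ne_top {S T : Set ℝ} (hT : volume T ≠ ⊤) (h : S ⊆ T) : volume S ≠ ⊤ :=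
  fun hs => hT (top_le_iff.1 (hs ▸ measure_mono h))

lemma vol_Ioo_ne_top {a b : ℝ} : volume (Ioo a b) ≠ ⊤ := by
  simp [Real.volume_Ioo]

lemma len_mono {X Y : Set ℝ} (hY : volume Y ≠ ⊤) (h : X ⊆ Y) : len X ≤ len Y :=
  ENNReal.toReal_mono hY (measure_mono h)

lemma len_union_le (X Y : Set ℝ) (hX : volume X ≠ ⊤) (hY : volume Y ≠ ⊤) :
    len (X ∪ Y) ≤ len X + len Y := by
  have h1 := measure_union_le (μ := volume) X Y
  have h2 : (volume X + volume Y).toReal = len X + len Y :=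
    ENNReal.toReal_add hX hY
  calc len (X ∪ Y) ≤ (volume X + volume Y).toReal :=
        ENNReal.toReal_mono (by simp [ENNReal.add_ne_top, hX, hY]) h1
    _ = len X + len Y := h2

lemma len_Ioo {s t : ℝ} (h : s ≤ t) : len (Ioo s t) = t - s := by
  simp [len, Real.volume_Ioo, ENNReal.toReal_ofReal (sub_nonneg.2 h)]

lemma len_Icc {s t : ℝ} (h : s ≤ t) : len (Icc s t) = t - s := by
  simp [len, Real.volume_Icc, ENNReal.toReal_ofReal (sub_nonneg.2 h)]

lemma len_nonneg (A : Set ℝ) : 0 ≤ len A := ENNReal.toReal_nonneg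

lemma len_split {a b : ℝ} {S : Set ℝ} (hS : MeasurableSet S) (hsub : S ⊆ Ioo a b)
    {s t : ℝ} (hst : s ≤ t) :
    len (S ∩ Ioo a t) = len (S ∩ Ioo a s) + len (S ∩ Ioo s t) := by
  have hfin : volume S ≠ ⊤ := vol_ne_top vol_Ioo_ne_top hsub
  have hset : S ∩ Ioo a t = (S ∩ Ioo a s) ∪ (S ∩ Ico s t) := by
    ext x
    constructor
    · rintro ⟨hxS, hxa, hxt⟩
      rcases lt_or_ge x s with h | h
      · exact Or.inl ⟨hxS, hxa, h⟩
      · exact Or.inr ⟨hxS, h, hxt⟩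
    · rintro (⟨hxS, hxa, hxs⟩ | ⟨hxS, hxs, hxt⟩)
      · exact ⟨hxS, hxa, lt_of_lt_of_le hxs hst⟩
      · exact ⟨hxS, (hsub hxS).1, hxt⟩
  have hdisj : Disjoint (S ∩ Ioo a s) (S ∩ Ico s t) := by
    apply Set.disjoint_left.2
    rintro x ⟨_, _, hxs⟩ ⟨_, hxs', _⟩
    exact absurd hxs (not_lt.2 hxs')
  have hIco : volume (S ∩ Ico s t) = volume (S ∩ Ioo s t) := by
    apply le_antisymm
    · have h1 : S ∩ Ico s t ⊆ (S ∩ Ioo s t) ∪ {s} := by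
        rintro x ⟨hxS, hxs, hxt⟩
        rcases eq_or_lt_of_le hxs with h | h
        · exact Or.inr (by simp [h.symm])
        · exact Or.inl ⟨hxS, h, hxt⟩
      calc volume (S ∩ Ico s t) ≤ volume ((S ∩ Ioo s t) ∪ {s}) := measure_mono h1
        _ ≤ volume (S ∩ Ioo s t) + volume ({s} : Set ℝ) := measure_union_le _ _
        _ = volume (S ∩ Ioo s t) := by simp
    · exact measure_mono (inter_subset_inter_right _ Ioo_subset_Ico_self)
  have hvol : volume (S ∩ Ioo a t) = volume (S ∩ Ioo a s) + volume (S ∩ Ioo s t) := by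
    rw [hset, measure_union hdisj (hS.inter measurableSet_Ico), hIco]
  rw [len, hvol, ENNReal.toReal_add (vol_ne_top hfin (inter_subset_left))
    (vol_ne_top hfin (inter_subset_left))]
  rfl

/-- In a set of positive measure inside an open interval, there is a point `x` of it and a radius
`r` such that `[x-r,x+r] ⊆ (p,q)` and the set fills more than `0.999` of `Ioo (x-r) (x+r)`. -/
lemma exists_density_interval {p q : ℝ} {B : Set ℝ} (hB : MeasurableSet B)
    (hBsub : B ⊆ Ioo p q) (hBpos : 0 < len B) :
    ∃ x r : ℝ, 0 < r ∧ p < x - r ∧ x + r < q ∧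
      0.999 * (2 * r) < len (B ∩ Ioo (x - r) (x + r)) := by
  have hBvol : volume B ≠ 0 := by
    intro h0
    rw [len, h0] at hBpos
    simp at hBpos
  have hne : (volume.restrict B) ≠ 0 := by
    rwa [Ne, Measure.restrict_eq_zero]
  haveI : (ae (volume.restrict B)).NeBot := ae_neBot.2 hne
  have hdens := Besicovitch.ae_tendsto_measure_inter_div volume B
  have hmem : ∀ᵐ x ∂(volume.restrict B), x ∈ B := ae_restrict_mem hB
  obtain ⟨x, hxB, hxt⟩ := (hmem.and hdens).exists
  have hx := hBsub hxB
  -- eventually the density ratio exceeds 0.999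
  have h999 : (ENNReal.ofReal 0.999) < 1 := by
    rw [ENNReal.ofReal_lt_one]; norm_num
  have h1 : ∀ᶠ r in 𝓝[>] (0:ℝ),
      ENNReal.ofReal 0.999 < volume (B ∩ closedBall x r) / volume (closedBall x r) :=
    hxt.eventually (eventually_gt_nhds h999)
  have hm : 0 < min (x - p) (q - x) := lt_min (by linarith [hx.1]) (by linarith [hx.2])
  have h2 : ∀ᶠ r in 𝓝[>] (0:ℝ), r < min (x - p) (q - x) :=
    eventually_nhdsWithin_of_eventually_nhds (eventually_lt_nhds hm)
  have h3 : ∀ᶠ r in 𝓝[>] (0:ℝ), 0 < r := self_mem_nhdsWithin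
  obtain ⟨r, hr1, hr2, hr3⟩ := (h1.and (h2.and h3)).exists
  refine ⟨x, r, hr3, by linarith [lt_of_lt_of_le hr2 (min_le_left _ _)],
    by linarith [lt_of_lt_of_le hr2 (min_le_right _ _)], ?_⟩
  have hcb : volume (closedBall x r) = ENNReal.ofReal (2 * r) := Real.volume_closedBall x r
  have hcb0 : volume (closedBall x r) ≠ 0 := by
    rw [hcb]; simp; linarith
  have hcbt : volume (closedBall x r) ≠ ⊤ := by rw [hcb]; exact ENNReal.ofReal_ne_top
  have hlt : ENNReal.ofReal 0.999 * volume (closedBall x r) < volume (B ∩ closedBall x r) := by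
    rw [← ENNReal.lt_div_iff_mul_lt (Or.inl hcb0) (Or.inl hcbt)]
    exact hr1
  -- pass from closedBall to Ioo
  have hsub2 : B ∩ closedBall x r ⊆ (B ∩ Ioo (x - r) (x + r)) ∪ {x - r, x + r} := by
    rintro y ⟨hyB, hy⟩
    rw [Real.closedBall_eq_Icc] at hy
    rcases eq_or_lt_of_le hy.1 with h | h
    · exact Or.inr (by simp [h.symm])
    rcases eq_or_lt_of_le hy.2 with h' | h'
    · exact Or.inr (by simp [h'])
    · exact Or.inl ⟨hyB, h, h'⟩
  have hvle : volume (B ∩ closedBall x r) ≤ volume (B ∩ Ioo (x - r) (x + r)) := by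
    calc volume (B ∩ closedBall x r) ≤ volume ((B ∩ Ioo (x - r) (x + r)) ∪ {x - r, x + r}) :=
          measure_mono hsub2
      _ ≤ volume (B ∩ Ioo (x - r) (x + r)) + volume ({x - r, x + r} : Set ℝ) :=
          measure_union_le _ _
      _ = volume (B ∩ Ioo (x - r) (x + r)) := by
          rw [show volume ({x - r, x + r} : Set ℝ) = 0 from
            (Set.Finite.measure_zero (by simp) volume), add_zero]
  have hlt2 : ENNReal.ofReal 0.999 * volume (closedBall x r) <
      volume (B ∩ Ioo (x - r) (x + r)) := lt_of_lt_of_le hlt hvle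
  have hfin2 : volume (B ∩ Ioo (x - r) (x + r)) ≠ ⊤ :=
    vol_ne_top vol_Ioo_ne_top (inter_subset_right)
  have := ENNReal.toReal_lt_toReal (by
    exact ENNReal.mul_ne_top ENNReal.ofReal_ne_top hcbt) hfin2 |>.2 hlt2
  rw [ENNReal.toReal_mul, hcb, ENNReal.toReal_ofReal (by norm_num),
    ENNReal.toReal_ofReal (by linarith)] at this
  exact this


lemma lenF_mono {a : ℝ} {B : Set ℝ} (hfin : volume B ≠ ⊤) :
    Monotone (fun p : ℝ => len (B ∩ Ioo a p)) := fun p q hpq =>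
  len_mono (vol_ne_top hfin inter_subset_left)
    (inter_subset_inter_right _ (Ioo_subset_Ioo_right hpq))

lemma lenF_lip {a : ℝ} {B : Set ℝ} (hfin : volume B ≠ ⊤) {p q : ℝ} (hpq : p ≤ q) :
    len (B ∩ Ioo a q) ≤ len (B ∩ Ioo a p) + (q - p) := by
  have hsub2 : B ∩ Ioo a q ⊆ (B ∩ Ioo a p) ∪ Icc p q := by
    rintro x ⟨hxB, hxa, hxq⟩
    rcases lt_or_ge x p with h | h
    · exact Or.inl ⟨hxB, hxa, h⟩
    · exact Or.inr ⟨h, le_of_lt hxq⟩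
  have h2 : volume (B ∩ Ioo a p) ≠ ⊤ := vol_ne_top hfin inter_subset_left
  have h3 : volume (Icc p q) ≠ ⊤ := by simp [Real.volume_Icc]
  have hfu : volume ((B ∩ Ioo a p) ∪ Icc p q) ≠ ⊤ := by
    intro htop
    have h1 := measure_union_le (μ := volume) (B ∩ Ioo a p) (Icc p q)
    rw [htop] at h1
    exact (ENNReal.add_ne_top.2 ⟨h2, h3⟩) (top_le_iff.1 h1)
  calc len (B ∩ Ioo a q) ≤ len ((B ∩ Ioo a p) ∪ Icc p q) := len_mono hfu hsub2
    _ ≤ len (B ∩ Ioo a p) + len (Icc p q) := len_union_le _ _ h2 h3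
    _ = len (B ∩ Ioo a p) + (q - p) := by rw [len_Icc hpq]

lemma lenF_cont {a : ℝ} {B : Set ℝ} (hfin : volume B ≠ ⊤) :
    Continuous (fun p : ℝ => len (B ∩ Ioo a p)) := by
  have : LipschitzWith 1 (fun p : ℝ => len (B ∩ Ioo a p)) := by
    apply LipschitzWith.of_dist_le_mul
    intro p q
    rw [NNReal.coe_one, one_mul, Real.dist_eq, Real.dist_eq]
    rcases le_total p q with h | h
    · have h1 := lenF_mono (a := a) hfin h
      have h2 := lenF_lip (a := a) hfin h
      simp only at h1
      rw [abs_of_nonpos (by linarith), abs_of_nonpos (by linarith)]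
      linarith
    · have h1 := lenF_mono (a := a) hfin h
      have h2 := lenF_lip (a := a) hfin h
      simp only at h1
      rw [abs_of_nonneg (by linarith), abs_of_nonneg (by linarith)]
      linarith
  exact this.continuous

/-- Key lemma: if `A, B ⊆ (a,b)` are disjoint with `|A| ≥ 0.01(b-a)` and `|B| > 0.01(b-a)`,
then some subinterval `(s,t)` carries strictly more than a `0.01` fraction of each. -/
lemma key_pair {a b : ℝ} (hab : a < b) {A B : Set ℝ}
    (hA : MeasurableSet A) (hB : MeasurableSet B) (hdisj : Disjoint A B)
    (hAsub : A ⊆ Ioo a b) (hBsub : B ⊆ Ioo a b)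
    (hlenA : 0.01 * (b - a) ≤ len A) (hlenB : 0.01 * (b - a) < len B) :
    ∃ s t : ℝ, a ≤ s ∧ s < t ∧ t ≤ b ∧
      0.01 * (t - s) < len (A ∩ Ioo s t) ∧ 0.01 * (t - s) < len (B ∩ Ioo s t) := by
  have hAfin : volume A ≠ ⊤ := vol_ne_top vol_Ioo_ne_top hAsub
  have hBfin : volume B ≠ ⊤ := vol_ne_top vol_Ioo_ne_top hBsub
  have hFb : len (A ∩ Ioo a b) = len A := by rw [inter_eq_self_of_subset_left hAsub]
  have hGb : len (B ∩ Ioo a b) = len B := by rw [inter_eq_self_of_subset_left hBsub]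
  have hGa : len (B ∩ Ioo a a) = 0 := by simp [len]
  have hvcont : Continuous (fun p : ℝ => len (B ∩ Ioo a p) - 0.01 * (p - a)) :=
    (lenF_cont hBfin).sub (continuous_const.mul (continuous_id.sub continuous_const))
  set T : Set ℝ := Icc a b ∩ {x | len (B ∩ Ioo a x) - 0.01 * (x - a) ≤ 0} with hTdef
  have hTclosed : IsClosed T :=
    isClosed_Icc.inter (isClosed_le hvcont continuous_const)
  have hTne : T.Nonempty :=
    ⟨a, ⟨le_refl a, hab.le⟩, show len (B ∩ Ioo a a) - 0.01 * (a - a) ≤ 0 by rw [hGa]; norm_num⟩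
  have hTbdd : BddAbove T := bddAbove_Icc.mono (fun x hx => hx.1)
  obtain ⟨t₀, ht₀def⟩ : ∃ x : ℝ, x = sSup T := ⟨_, rfl⟩
  have ht₀T : t₀ ∈ T := ht₀def ▸ hTclosed.csSup_mem hTne hTbdd
  obtain ⟨ht₀ab, ht₀v⟩ := ht₀T
  have ht₀v : len (B ∩ Ioo a t₀) - 0.01 * (t₀ - a) ≤ 0 := ht₀v
  have ht₀ab : t₀ ∈ Icc a b := ht₀ab
  have hvb : 0 < len (B ∩ Ioo a b) - 0.01 * (b - a) := by rw [hGb]; linarith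
  have ht₀b : t₀ < b := by
    rcases eq_or_lt_of_le ht₀ab.2 with h | h
    · exfalso; rw [h] at ht₀v; linarith
    · exact h
  have hposv : ∀ s : ℝ, t₀ < s → s ≤ b → 0 < len (B ∩ Ioo a s) - 0.01 * (s - a) := by
    intro s hs hsb
    by_contra hc
    push_neg at hc
    have hsT : s ∈ T := ⟨⟨le_trans ht₀ab.1 hs.le, hsb⟩, hc⟩
    have h2 := le_csSup hTbdd hsT
    rw [← ht₀def] at h2
    linarith
  -- choose ε
  have hopen : IsOpen {x : ℝ | len (B ∩ Ioo a x) - 0.01 * (x - a)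
      < len (B ∩ Ioo a b) - 0.01 * (b - a)} := isOpen_lt hvcont continuous_const
  obtain ⟨η, hη, hball⟩ := Metric.isOpen_iff.1 hopen t₀
    (show _ from by simp only [mem_setOf_eq]; linarith)
  obtain ⟨ε, hεdef⟩ : ∃ x : ℝ, x = min (η / 2) (b - t₀) := ⟨_, rfl⟩
  have hεpos : 0 < ε := by rw [hεdef]; exact lt_min (by linarith) (by linarith)
  have hεb : t₀ + ε ≤ b := by
    have := min_le_right (η / 2) (b - t₀); rw [hεdef]; linarith
  have hvless : ∀ x, t₀ ≤ x → x ≤ t₀ + ε →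
      len (B ∩ Ioo a x) - 0.01 * (x - a) < len (B ∩ Ioo a b) - 0.01 * (b - a) := by
    intro x h1 h2
    have h3 : ε ≤ η / 2 := hεdef ▸ min_le_left _ _
    exact hball (show x ∈ Metric.ball t₀ η by
      rw [Metric.mem_ball, Real.dist_eq, abs_of_nonneg (by linarith)]; linarith)
  -- B has positive measure in (t₀, t₀+ε)
  have hsplitG : len (B ∩ Ioo a (t₀ + ε))
      = len (B ∩ Ioo a t₀) + len (B ∩ Ioo t₀ (t₀ + ε)) :=
    len_split hB hBsub (by linarith)
  have hvt₀ε : 0 < len (B ∩ Ioo a (t₀ + ε)) - 0.01 * ((t₀ + ε) - a) :=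
    hposv _ (by linarith) hεb
  have hB'pos : 0 < len (B ∩ Ioo t₀ (t₀ + ε)) := by linarith
  -- density point
  obtain ⟨x, r, hr, hxr1, hxr2, hdens⟩ := exists_density_interval
    (hB.inter measurableSet_Ioo) (inter_subset_right) hB'pos
  have hIsub : Ioo (x - r) (x + r) ⊆ Ioo t₀ (t₀ + ε) :=
    Ioo_subset_Ioo (le_of_lt hxr1) (le_of_lt hxr2)
  have hBI : (B ∩ Ioo t₀ (t₀ + ε)) ∩ Ioo (x - r) (x + r) = B ∩ Ioo (x - r) (x + r) := by
    rw [inter_assoc, inter_eq_self_of_subset_right hIsub]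
  rw [hBI] at hdens
  have hst : x - r < x + r := by linarith
  have has : a ≤ x - r := le_trans ht₀ab.1 (le_of_lt hxr1)
  have htb : x + r ≤ b := le_trans (le_of_lt hxr2) hεb
  -- A is tiny on (s,t)
  have hd2 : Disjoint (A ∩ Ioo (x - r) (x + r)) (B ∩ Ioo (x - r) (x + r)) :=
    hdisj.mono inter_subset_left inter_subset_left
  have hABle : len (A ∩ Ioo (x - r) (x + r)) + len (B ∩ Ioo (x - r) (x + r))
      ≤ (x + r) - (x - r) := by
    have hm := measure_union (μ := volume) hd2 (hB.inter measurableSet_Ioo)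
    have hfa : volume (A ∩ Ioo (x - r) (x + r)) ≠ ⊤ :=
      vol_ne_top vol_Ioo_ne_top inter_subset_right
    have hfb : volume (B ∩ Ioo (x - r) (x + r)) ≠ ⊤ :=
      vol_ne_top vol_Ioo_ne_top inter_subset_right
    have h1 : len (A ∩ Ioo (x - r) (x + r)) + len (B ∩ Ioo (x - r) (x + r))
        = len ((A ∩ Ioo (x - r) (x + r)) ∪ (B ∩ Ioo (x - r) (x + r))) := by
      rw [len, len, len, ← ENNReal.toReal_add hfa hfb, hm]
    rw [h1, ← len_Ioo (le_of_lt hst)]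
    exact len_mono vol_Ioo_ne_top (union_subset inter_subset_right inter_subset_right)
  have hAst : len (A ∩ Ioo (x - r) (x + r)) < 0.001 * (2 * r) := by linarith
  -- splitting identities
  have hFsplit : len (A ∩ Ioo a (x + r))
      = len (A ∩ Ioo a (x - r)) + len (A ∩ Ioo (x - r) (x + r)) :=
    len_split hA hAsub (le_of_lt hst)
  have hGsplit : len (B ∩ Ioo a (x + r))
      = len (B ∩ Ioo a (x - r)) + len (B ∩ Ioo (x - r) (x + r)) :=
    len_split hB hBsub (le_of_lt hst)
  have hFsplitb : len (A ∩ Ioo a b)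
      = len (A ∩ Ioo a (x + r)) + len (A ∩ Ioo (x + r) b) :=
    len_split hA hAsub htb
  have hGsplitb : len (B ∩ Ioo a b)
      = len (B ∩ Ioo a (x + r)) + len (B ∩ Ioo (x + r) b) :=
    len_split hB hBsub htb
  have hvs : 0 < len (B ∩ Ioo a (x - r)) - 0.01 * ((x - r) - a) :=
    hposv _ hxr1 (le_trans (le_of_lt hst) htb)
  have hvt : len (B ∩ Ioo a (x + r)) - 0.01 * ((x + r) - a)
      < len (B ∩ Ioo a b) - 0.01 * (b - a) :=
    hvless _ (by linarith) (le_of_lt hxr2)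
  by_cases hcase : 0 < len (A ∩ Ioo a (x - r)) - 0.01 * ((x - r) - a)
  · exact ⟨a, x - r, le_refl a, lt_of_le_of_lt ht₀ab.1 hxr1,
      le_trans (le_of_lt hst) htb, by linarith, by linarith⟩
  · push_neg at hcase
    refine ⟨x + r, b, le_trans has (le_of_lt hst), lt_of_lt_of_le hxr2 hεb, le_refl b,
      ?_, ?_⟩
    · rw [hFb] at hFsplitb
      linarith
    · rw [hGb] at hGsplitb
      linarith

lemma lev_closed {g : ℝ → ℝ} (hg : ContinuousOn g (Icc (0:ℝ) 1)) (δ : ℝ) (k : ℤ) :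
    IsClosed (lev g δ k) := by
  have h : lev g δ k = Icc (0:ℝ) 1 ∩ g ⁻¹' (Icc ((k:ℝ) * δ) (((k:ℝ) + 1) * δ)) := by
    ext x
    simp only [lev, mem_setOf_eq, mem_inter_iff, mem_preimage, mem_Icc]
  rw [h]
  exact hg.preimage_isClosed_of_isClosed isClosed_Icc isClosed_Icc

/-- a four-set covering bound -/
lemma len_quad_cover {a b : ℝ} (hab : a ≤ b) {S1 S2 S3 S4 : Set ℝ}
    (h1 : S1 ⊆ Ioo a b) (h2 : S2 ⊆ Ioo a b) (h3 : S3 ⊆ Ioo a b) (h4 : S4 ⊆ Ioo a b)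
    (hcov : Ioo a b ⊆ S1 ∪ S2 ∪ S3 ∪ S4) :
    b - a ≤ len S1 + len S2 + len S3 + len S4 := by
  have f1 : volume S1 ≠ ⊤ := vol_ne_top vol_Ioo_ne_top h1
  have f2 : volume S2 ≠ ⊤ := vol_ne_top vol_Ioo_ne_top h2
  have f3 : volume S3 ≠ ⊤ := vol_ne_top vol_Ioo_ne_top h3
  have f4 : volume S4 ≠ ⊤ := vol_ne_top vol_Ioo_ne_top h4
  have hv : volume (Ioo a b) ≤ volume S1 + volume S2 + volume S3 + volume S4 :=
    le_trans (measure_mono hcov) (le_trans (measure_union_le _ _)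
      (add_le_add (le_trans (measure_union_le _ _)
        (add_le_add (measure_union_le _ _) le_rfl)) le_rfl))
  have hne : volume S1 + volume S2 + volume S3 + volume S4 ≠ ⊤ := by
    simp [ENNReal.add_ne_top, f1, f2, f3, f4]
  have hsum : (volume S1 + volume S2 + volume S3 + volume S4).toReal
      = len S1 + len S2 + len S3 + len S4 := by
    rw [ENNReal.toReal_add (by simp [ENNReal.add_ne_top, f1, f2, f3]) f4,
      ENNReal.toReal_add (by simp [ENNReal.add_ne_top, f1, f2]) f3,
      ENNReal.toReal_add f1 f2]
    rfl
  calc b - a = len (Ioo a b) := (len_Ioo hab).symm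
    _ ≤ (volume S1 + volume S2 + volume S3 + volume S4).toReal :=
        ENNReal.toReal_mono hne hv
    _ = len S1 + len S2 + len S3 + len S4 := hsum

/-- a two-set covering bound -/
lemma len_pair_cover {a b : ℝ} (hab : a ≤ b) {S1 S2 : Set ℝ}
    (h1 : S1 ⊆ Ioo a b) (h2 : S2 ⊆ Ioo a b)
    (hcov : Ioo a b ⊆ S1 ∪ S2) :
    b - a ≤ len S1 + len S2 := by
  have f1 : volume S1 ≠ ⊤ := vol_ne_top vol_Ioo_ne_top h1
  have f2 : volume S2 ≠ ⊤ := vol_ne_top vol_Ioo_ne_top h2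
  have hv : volume (Ioo a b) ≤ volume S1 + volume S2 :=
    le_trans (measure_mono hcov) (measure_union_le _ _)
  calc b - a = len (Ioo a b) := (len_Ioo hab).symm
    _ ≤ (volume S1 + volume S2).toReal :=
        ENNReal.toReal_mono (by simp [ENNReal.add_ne_top, f1, f2]) hv
    _ = len S1 + len S2 := ENNReal.toReal_add f1 f2


set_option maxHeartbeats 1000000 in
theorem stmt2 (δ : ℝ) (hδ : 0 < δ) (M : ℕ) (hM : 100 < M) (g : ℝ → ℝ)
    (hg : ContinuousOn g (Icc (0:ℝ) 1)) (hg0 : g 0 = 0) (hg1 : g 1 = (M : ℝ) * δ)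
    (hlev : ∀ k : ℕ, {s ∈ Icc (0:ℝ) 1 | g s = (k : ℝ) * δ}.Finite)
    (k : ℕ) (hk : k ∈ unsat g δ)
    (a b : ℝ) (ha : 0 ≤ a) (hab : a < b) (hb : b ≤ 1)
    (hlow : 0.01 * (b - a) ≤ len (lev g δ k ∩ Ioo a b))
    (hhigh : len (lev g δ k ∩ Ioo a b) ≤ 0.1 * (b - a)) :
    len (lev g δ ((k : ℤ) - 1) ∩ Ioo a b) > 0.8 * (b - a) ∨
    len (lev g δ ((k : ℤ) + 1) ∩ Ioo a b) > 0.8 * (b - a) := by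
  obtain ⟨hk1, hk2, hk3⟩ := hk
  have hL : 0 < b - a := sub_pos.2 hab
  have hIoo01 : Ioo a b ⊆ Icc (0:ℝ) 1 :=
    fun x hx => ⟨le_trans ha hx.1.le, le_trans hx.2.le hb⟩
  have hlevm : ∀ j : ℤ, MeasurableSet (lev g δ j) :=
    fun j => (lev_closed hg δ j).measurableSet
  have hnbrm : ∀ j : ℤ, MeasurableSet (nbr g δ j) := fun j => by
    unfold nbr
    exact ((hlevm _).union (hlevm _)).union (hlevm _)
  -- Step I : the complement of the neighbors is small in (a,b)
  have hAmeas : MeasurableSet (lev g δ (k:ℤ) ∩ Ioo a b) :=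
    (hlevm _).inter measurableSet_Ioo
  have hBmeas : MeasurableSet ((Icc (0:ℝ) 1 \ nbr g δ (k:ℤ)) ∩ Ioo a b) :=
    (measurableSet_Icc.diff (hnbrm _)).inter measurableSet_Ioo
  have hdisjAB : Disjoint (lev g δ (k:ℤ) ∩ Ioo a b)
      ((Icc (0:ℝ) 1 \ nbr g δ (k:ℤ)) ∩ Ioo a b) := by
    rw [Set.disjoint_left]
    rintro x ⟨hx1, _⟩ ⟨⟨_, hx2⟩, _⟩
    exact hx2 (Or.inl (Or.inr hx1))
  have hBsmall : len ((Icc (0:ℝ) 1 \ nbr g δ (k:ℤ)) ∩ Ioo a b) ≤ 0.01 * (b - a) := by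
    by_contra hcon
    push_neg at hcon
    obtain ⟨s, t, hs1, hs2, hs3, hs4, hs5⟩ := key_pair hab hAmeas hBmeas hdisjAB
      inter_subset_right inter_subset_right hlow hcon
    apply hk1
    have hsub1 : Ioo s t ⊆ Ioo a b := Ioo_subset_Ioo hs1 hs3
    have he1 : (lev g δ (k:ℤ) ∩ Ioo a b) ∩ Ioo s t = lev g δ (k:ℤ) ∩ Ioo s t := by
      rw [inter_assoc, inter_eq_self_of_subset_right hsub1]
    have he2 : ((Icc (0:ℝ) 1 \ nbr g δ (k:ℤ)) ∩ Ioo a b) ∩ Ioo s t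
        = (Icc (0:ℝ) 1 \ nbr g δ (k:ℤ)) ∩ Ioo s t := by
      rw [inter_assoc, inter_eq_self_of_subset_right hsub1]
    rw [he1] at hs4
    rw [he2] at hs5
    exact ⟨s, t, le_trans ha hs1, hs2, le_trans hs3 hb, hs4, hs5⟩
  -- Step II : the two neighbors占 almost everything
  have hcover : b - a ≤ len (lev g δ ((k:ℤ) - 1) ∩ Ioo a b)
      + len (lev g δ (k:ℤ) ∩ Ioo a b)
      + len (lev g δ ((k:ℤ) + 1) ∩ Ioo a b)
      + len ((Icc (0:ℝ) 1 \ nbr g δ (k:ℤ)) ∩ Ioo a b) := by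
    apply len_quad_cover hab.le inter_subset_right inter_subset_right
      inter_subset_right inter_subset_right
    intro x hx
    by_cases hxn : x ∈ nbr g δ (k:ℤ)
    · rcases hxn with (h | h) | h
      · exact Or.inl (Or.inl (Or.inl ⟨h, hx⟩))
      · exact Or.inl (Or.inl (Or.inr ⟨h, hx⟩))
      · exact Or.inl (Or.inr ⟨h, hx⟩)
    · exact Or.inr ⟨⟨hIoo01 hx, hxn⟩, hx⟩
  -- Step III : conclusion
  by_contra hcon
  push_neg at hcon
  obtain ⟨hc1, hc2⟩ := hcon
  have h9p : 0.09 * (b - a) ≤ len (lev g δ ((k:ℤ) + 1) ∩ Ioo a b) := by linarith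
  have h9m : 0.09 * (b - a) ≤ len (lev g δ ((k:ℤ) - 1) ∩ Ioo a b) := by linarith
  have hcast : ((k + 1 : ℕ) : ℤ) = (k:ℤ) + 1 := by push_cast; ring
  have hB2small : len ((Icc (0:ℝ) 1 \ nbr g δ ((k:ℤ) + 1)) ∩ Ioo a b)
      ≤ 0.01 * (b - a) := by
    by_contra hcon2
    push_neg at hcon2
    apply hk3
    simp only [sat, Set.mem_setOf_eq, hcast]
    refine ⟨a, b, ha, hab, hb, ?_, ?_⟩
    · have h001 : 0.01 * (b - a) < 0.09 * (b - a) := by nlinarith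
      linarith
    · exact hcon2
  have hcover2 : b - a ≤ len (nbr g δ ((k:ℤ) + 1) ∩ Ioo a b)
      + len ((Icc (0:ℝ) 1 \ nbr g δ ((k:ℤ) + 1)) ∩ Ioo a b) := by
    apply len_pair_cover hab.le inter_subset_right inter_subset_right
    intro x hx
    by_cases hxn : x ∈ nbr g δ ((k:ℤ) + 1)
    · exact Or.inl ⟨hxn, hx⟩
    · exact Or.inr ⟨⟨hIoo01 hx, hxn⟩, hx⟩
  have hnbig : 0.99 * (b - a) ≤ len (nbr g δ ((k:ℤ) + 1) ∩ Ioo a b) := by linarith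
  -- almost-disjointness of lev (k-1) from nbr (k+1)
  have hnull : volume ((nbr g δ ((k:ℤ) + 1) ∩ Ioo a b)
      ∩ (lev g δ ((k:ℤ) - 1) ∩ Ioo a b)) = 0 := by
    apply measure_mono_null ?_ ((hlev k).measure_zero volume)
    rintro x ⟨⟨hxn, _⟩, hxm, _⟩
    obtain ⟨hxI, hg1, hg2⟩ := hxm
    push_cast at hg1 hg2
    refine ⟨hxI, ?_⟩
    push_cast
    rcases hxn with (h | h) | h
    · obtain ⟨_, h1, h2⟩ := h
      push_cast at h1 h2
      linarith
    · obtain ⟨_, h1, h2⟩ := h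
      push_cast at h1 h2
      nlinarith
    · obtain ⟨_, h1, h2⟩ := h
      push_cast at h1 h2
      nlinarith
  have hle : len (nbr g δ ((k:ℤ) + 1) ∩ Ioo a b)
      + len (lev g δ ((k:ℤ) - 1) ∩ Ioo a b) ≤ b - a := by
    have hmeas2 : MeasurableSet (lev g δ ((k:ℤ) - 1) ∩ Ioo a b) :=
      (hlevm _).inter measurableSet_Ioo
    have hm := measure_union_add_inter (μ := volume)
      (nbr g δ ((k:ℤ) + 1) ∩ Ioo a b) hmeas2
    have hun : volume ((nbr g δ ((k:ℤ) + 1) ∩ Ioo a b)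
        ∪ (lev g δ ((k:ℤ) - 1) ∩ Ioo a b)) ≤ volume (Ioo a b) :=
      measure_mono (union_subset inter_subset_right inter_subset_right)
    have hsum : volume (nbr g δ ((k:ℤ) + 1) ∩ Ioo a b)
        + volume (lev g δ ((k:ℤ) - 1) ∩ Ioo a b) ≤ volume (Ioo a b) := by
      rw [← hm, hnull, add_zero]
      exact hun
    have f1 : volume (nbr g δ ((k:ℤ) + 1) ∩ Ioo a b) ≠ ⊤ :=
      vol_ne_top vol_Ioo_ne_top inter_subset_right
    have f2 : volume (lev g δ ((k:ℤ) - 1) ∩ Ioo a b) ≠ ⊤ :=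
      vol_ne_top vol_Ioo_ne_top inter_subset_right
    calc len (nbr g δ ((k:ℤ) + 1) ∩ Ioo a b) + len (lev g δ ((k:ℤ) - 1) ∩ Ioo a b)
        = (volume (nbr g δ ((k:ℤ) + 1) ∩ Ioo a b)
          + volume (lev g δ ((k:ℤ) - 1) ∩ Ioo a b)).toReal :=
          (ENNReal.toReal_add f1 f2).symm
      _ ≤ (volume (Ioo a b)).toReal := ENNReal.toReal_mono vol_Ioo_ne_top hsum
      _ = b - a := len_Ioo hab.le
  linarith
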